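/- Define the polynomial sequence Q_n in ℚ[x, y, λ] by Q_0 = 1 and Q_n = (-1)^n C(λ, n) - x * sum_{k=1}^{n} (-1)^k C(y, k) Q_{n-k} for n ≥ 1, where C(λ, n) and C(y, k) are generalized binomial coefficient polynomials. Then Q_n = sum_{m=0}^{n} sum_{k=0}^{m} (-1)^{n+k} C(m,k) C(λ+ky, n) x^m. -/

import Mathlib

open Finset

/-- Unsigned Stirling numbers of the first kind. -/
def stirling1 : ℕ → ℕ → ℕ
  | 0, 0 => 1
  | 0, _ + 1 => 0
  | _ + 1, 0 => 0
  | n + 1, k + 1 => n * stirling1 n (k + 1) + stirling1 n k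

/-- Stirling numbers of the second kind. -/
def stirling2 : ℕ → ℕ → ℕ
  | 0, 0 => 1
  | 0, _ + 1 => 0
  | _ + 1, 0 => 0
  | n + 1, k + 1 => (k + 1) * stirling2 n (k + 1) + stirling2 n k

/-- Generalized binomial coefficient `C(x, r) = x(x-1)⋯(x-r+1)/r!` in a ℚ-algebra. -/
noncomputable def gchoose {R : Type*} [CommRing R] [Algebra ℚ R] (x : R) (r : ℕ) : R :=
  algebraMap ℚ R ((r.factorial : ℚ)⁻¹) * ∏ i ∈ Finset.range r, (x - i)

section Aux

variable {R : Type*} [CommRing R] [Algebra ℚ R]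

lemma gchoose_zero (x : R) : gchoose x 0 = 1 := by simp [gchoose]

lemma gchoose_succ (x : R) (n : ℕ) :
    ((n : ℚ) + 1) • gchoose x (n + 1) = (x - n) * gchoose x n := by
  unfold gchoose
  rw [prod_range_succ, Algebra.smul_def, ← mul_assoc, ← map_mul]
  have h : ((n : ℚ) + 1) * ((Nat.factorial (n+1) : ℚ))⁻¹ = ((Nat.factorial n : ℚ))⁻¹ := by
    rw [Nat.factorial_succ]
    push_cast
    rw [mul_inv]
    have : ((n : ℚ) + 1) ≠ 0 := by positivity
    field_simp
  rw [h]; ring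

/-- Chu–Vandermonde identity for `gchoose`. -/
lemma gchoose_add (a b : R) (n : ℕ) :
    gchoose (a + b) n = ∑ j ∈ range (n + 1), gchoose a j * gchoose b (n - j) := by
  induction n with
  | zero => simp [gchoose_zero]
  | succ n ih =>
    have hne : ((n : ℚ) + 1) ≠ 0 := by positivity
    apply smul_right_injective R hne
    simp only
    rw [gchoose_succ, ih, smul_sum]
    have hsplit : ∀ j ∈ range (n + 2),
        ((n : ℚ) + 1) • (gchoose a j * gchoose b (n + 1 - j)) =
          (j : ℚ) • (gchoose a j * gchoose b (n + 1 - j)) +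
          ((n + 1 - j : ℕ) : ℚ) • (gchoose a j * gchoose b (n + 1 - j)) := by
      intro j hj
      rw [← add_smul]
      congr 1
      rw [Nat.cast_sub (by simpa using Nat.lt_succ_iff.mp (mem_range.mp hj))]
      push_cast; ring
    rw [sum_congr rfl hsplit, sum_add_distrib]
    have h1 : ∑ j ∈ range (n + 2), (j : ℚ) • (gchoose a j * gchoose b (n + 1 - j)) =
        ∑ i ∈ range (n + 1), ((a - i) * gchoose a i) * gchoose b (n - i) := by
      rw [sum_range_succ']
      simp only [Nat.cast_zero, zero_smul, add_zero, Nat.succ_sub_succ]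
      refine sum_congr rfl fun i _ => ?_
      rw [← smul_mul_assoc]
      congr 1
      rw [Nat.cast_add_one]
      exact gchoose_succ a i
    have h2 : ∑ j ∈ range (n + 2), ((n + 1 - j : ℕ) : ℚ) • (gchoose a j * gchoose b (n + 1 - j)) =
        ∑ i ∈ range (n + 1), gchoose a i * ((b - ((n - i : ℕ) : R)) * gchoose b (n - i)) := by
      rw [sum_range_succ]
      simp only [Nat.sub_self, Nat.cast_zero, zero_smul, add_zero]
      refine sum_congr rfl fun i hi => ?_
      have hle : i ≤ n := Nat.lt_succ_iff.mp (mem_range.mp hi)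
      have hsub : n + 1 - i = (n - i) + 1 := by omega
      rw [hsub, ← mul_smul_comm]
      congr 1
      rw [Nat.cast_add_one]
      exact gchoose_succ b (n - i)
    rw [h1, h2, ← sum_add_distrib, mul_sum]
    refine sum_congr rfl fun i hi => ?_
    have hle : i ≤ n := Nat.lt_succ_iff.mp (mem_range.mp hi)
    have : ((n - i : ℕ) : R) = (n : R) - (i : R) := by
      rw [Nat.cast_sub hle]
    rw [this]; ring

/-- `m`-th alternating binomial sum of `f`. -/
def altsum (m : ℕ) (f : ℕ → R) : R := ∑ k ∈ range (m + 1), (-1 : R) ^ k * (m.choose k) * f k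

lemma altsum_succ (m : ℕ) (f : ℕ → R) :
    altsum (m + 1) f = altsum m f - altsum m (fun k => f (k + 1)) := by
  have e := sum_range_succ' (fun k => (-1 : R) ^ k * ((m+1).choose k) * f k) (m + 1)
  have e2 := sum_range_succ' (fun k => (-1 : R) ^ k * (m.choose k) * f k) (m + 1)
  have e3 := sum_range_succ (fun k => (-1 : R) ^ k * (m.choose k) * f k) (m + 1)
  simp only [Nat.choose_succ_self, Nat.cast_zero, mul_zero, zero_mul, add_zero,
    Nat.choose_zero_right, Nat.cast_one, pow_zero, one_mul, mul_one] at e e2 e3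
  have key : ∀ k ∈ range (m + 1), (-1 : R) ^ (k+1) * ((m+1).choose (k+1)) * f (k+1) =
      (-1 : R) ^ (k+1) * (m.choose (k+1)) * f (k+1)
        - (-1 : R) ^ k * (m.choose k) * f (k+1) := by
    intro k _
    rw [Nat.choose_succ_succ, pow_succ]
    push_cast; ring
  unfold altsum
  rw [e, sum_congr rfl key, sum_sub_distrib]
  have hA : (∑ k ∈ range (m + 1), (-1 : R) ^ (k+1) * (m.choose (k+1)) * f (k+1)) + f 0 =
      ∑ k ∈ range (m + 1), (-1 : R) ^ k * (m.choose k) * f k := by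
    rw [← e2, e3]
  rw [← hA]
  ring

lemma altsum_finset_sum {ι : Type*} (m : ℕ) (s : Finset ι) (g : ι → ℕ → R) :
    altsum m (fun k => ∑ j ∈ s, g j k) = ∑ j ∈ s, altsum m (g j) := by
  unfold altsum
  simp_rw [mul_sum]
  exact sum_comm

lemma altsum_const_mul (m : ℕ) (c : R) (g : ℕ → R) :
    altsum m (fun k => c * g k) = c * altsum m g := by
  unfold altsum
  rw [mul_sum]
  exact sum_congr rfl fun k _ => by ring

lemma altsum_sub (m : ℕ) (f g : ℕ → R) :
    altsum m (fun k => f k - g k) = altsum m f - altsum m g := by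
  unfold altsum
  rw [← sum_sub_distrib]
  exact sum_congr rfl fun k _ => by ring

/-- Finite differences of order `m` kill `gchoose` of degree `d < m`. -/
lemma altsum_gchoose_eq_zero (y l : R) :
    ∀ m, ∀ d, d < m → altsum m (fun k => gchoose (l + (k : R) * y) d) = 0 := by
  intro m
  induction m with
  | zero => intro d hd; omega
  | succ m ih =>
    intro d hd
    rw [altsum_succ]
    have step1 : (fun k => gchoose (l + ((k + 1 : ℕ) : R) * y) d) =
        fun (k : ℕ) => ∑ j ∈ range (d + 1), gchoose y j * gchoose (l + (k : R) * y) (d - j) := by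
      funext k
      have h : l + ((k + 1 : ℕ) : R) * y = y + (l + (k : R) * y) := by push_cast; ring
      rw [h, gchoose_add]
    rw [step1, altsum_finset_sum]
    have step2 : ∀ j ∈ range (d + 1),
        altsum m (fun k => gchoose y j * gchoose (l + (k : R) * y) (d - j)) =
          gchoose y j * altsum m (fun k => gchoose (l + (k : R) * y) (d - j)) := by
      intro j _; exact altsum_const_mul m _ _
    rw [sum_congr rfl step2, sum_range_succ' _ d]
    have step3 : ∀ i ∈ range d,
        gchoose y (i + 1) * altsum m (fun k => gchoose (l + (k : R) * y) (d - (i + 1))) = 0 := by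
      intro i hi
      rw [ih (d - (i + 1)) (by have := mem_range.mp hi; omega), mul_zero]
    rw [sum_congr rfl step3, sum_const_zero, zero_add, Nat.sub_zero, gchoose_zero, one_mul]
    ring

/-- The coefficient of `x^m` in `S n`. -/
noncomputable def Acoef (y l : R) (n m : ℕ) : R :=
  ∑ k ∈ range (m + 1), (-1 : R) ^ (n + k) * (m.choose k) * gchoose (l + (k : R) * y) n

lemma Acoef_eq (y l : R) (n m : ℕ) :
    Acoef y l n m = (-1 : R) ^ n * altsum m (fun k => gchoose (l + (k : R) * y) n) := by
  unfold Acoef altsum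
  rw [mul_sum]
  exact sum_congr rfl fun k _ => by rw [pow_add]; ring

lemma Acoef_eq_zero (y l : R) {n m : ℕ} (h : n < m) : Acoef y l n m = 0 := by
  rw [Acoef_eq, altsum_gchoose_eq_zero y l m n h, mul_zero]

lemma Acoef_zero (y l : R) (n : ℕ) : Acoef y l n 0 = (-1 : R) ^ n * gchoose l n := by
  unfold Acoef
  rw [sum_range_one]
  norm_num

lemma vander_step (y l : R) (n k : ℕ) :
    ∑ j ∈ Icc 1 n, gchoose y j * gchoose (l + (k : R) * y) (n - j) =
      gchoose (l + ((k + 1 : ℕ) : R) * y) n - gchoose (l + (k : R) * y) n := by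
  have hv : gchoose (l + ((k + 1 : ℕ) : R) * y) n =
      ∑ j ∈ range (n + 1), gchoose y j * gchoose (l + (k : R) * y) (n - j) := by
    have h : l + ((k + 1 : ℕ) : R) * y = y + (l + (k : R) * y) := by push_cast; ring
    rw [h, gchoose_add]
  rw [hv, sum_range_succ' (fun j => gchoose y j * gchoose (l + (k : R) * y) (n - j)) n]
  simp only [gchoose_zero, one_mul, Nat.sub_zero]
  rw [add_sub_cancel_right]
  rw [show Icc 1 n = Ico 1 (n + 1) from (Finset.Ico_add_one_right_eq_Icc 1 n).symm, sum_Ico_eq_sum_range]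
  simp only [Nat.add_sub_cancel]
  exact sum_congr rfl fun i _ => by rw [Nat.add_comm 1 i]

/-- Key recursion for the coefficients. -/
lemma Acoef_rec (y l : R) (n m : ℕ) :
    ∑ j ∈ Icc 1 n, (-1 : R) ^ j * gchoose y j * Acoef y l (n - j) m =
      - Acoef y l n (m + 1) := by
  have step1 : ∀ j ∈ Icc 1 n,
      (-1 : R) ^ j * gchoose y j * Acoef y l (n - j) m =
        (-1 : R) ^ n * (gchoose y j *
          altsum m (fun k => gchoose (l + (k : R) * y) (n - j))) := by
    intro j hj
    have hle : j ≤ n := (mem_Icc.mp hj).2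
    rw [Acoef_eq]
    have hs : (-1 : R) ^ j * (-1 : R) ^ (n - j) = (-1 : R) ^ n := by
      rw [← pow_add]
      congr 1
      omega
    linear_combination gchoose y j * altsum m (fun k => gchoose (l + (k : R) * y) (n - j)) * hs
  rw [sum_congr rfl step1, ← mul_sum]
  have step2 : ∑ j ∈ Icc 1 n, gchoose y j * altsum m (fun k => gchoose (l + (k : R) * y) (n - j))
      = altsum m (fun k => ∑ j ∈ Icc 1 n, gchoose y j * gchoose (l + (k : R) * y) (n - j)) := by
    rw [altsum_finset_sum]
    exact sum_congr rfl fun j _ => (altsum_const_mul m _ _).symm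
  rw [step2]
  have step3 : (fun (k : ℕ) => ∑ j ∈ Icc 1 n, gchoose y j * gchoose (l + (k : R) * y) (n - j)) =
      fun (k : ℕ) => gchoose (l + ((k + 1 : ℕ) : R) * y) n - gchoose (l + (k : R) * y) n := by
    funext k; exact vander_step y l n k
  rw [step3, altsum_sub, Acoef_eq, altsum_succ]
  ring

end Aux

open MvPolynomial in
theorem stmt9 (Q : ℕ → MvPolynomial (Fin 3) ℚ)
    (x y l : MvPolynomial (Fin 3) ℚ) (hx : x = X 0) (hy : y = X 1) (hl : l = X 2)
    (hQ0 : Q 0 = 1)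
    (hQ : ∀ n : ℕ, 1 ≤ n →
      Q n = (-1) ^ n * gchoose l n -
        x * ∑ k ∈ Finset.Icc 1 n, (-1) ^ k * gchoose y k * Q (n - k)) :
    ∀ n : ℕ, Q n = ∑ m ∈ Finset.range (n + 1), ∑ k ∈ Finset.range (m + 1),
      (-1) ^ (n + k) * (m.choose k : MvPolynomial (Fin 3) ℚ) *
        gchoose (l + (k : MvPolynomial (Fin 3) ℚ) * y) n * x ^ m := by
  have hS : ∀ t : ℕ, (∑ m ∈ Finset.range (t + 1), ∑ k ∈ Finset.range (m + 1),
      (-1) ^ (t + k) * (m.choose k : MvPolynomial (Fin 3) ℚ) * gchoose (l + (k : MvPolynomial (Fin 3) ℚ) * y) t * x ^ m)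
      = ∑ m ∈ Finset.range (t + 1), Acoef y l t m * x ^ m := by
    intro t
    refine sum_congr rfl fun m _ => ?_
    rw [Acoef, sum_mul]
  intro n
  induction n using Nat.strong_induction_on with
  | _ n ih =>
    rcases Nat.eq_zero_or_pos n with rfl | hn
    · rw [hQ0, hS 0]
      simp [Acoef_zero, gchoose_zero]
    · rw [hQ n hn, hS n]
      have hrw : ∑ k ∈ Icc 1 n, (-1 : MvPolynomial (Fin 3) ℚ) ^ k * gchoose y k * Q (n - k) =
          ∑ j ∈ Icc 1 n, (-1 : MvPolynomial (Fin 3) ℚ) ^ j * gchoose y j *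
            (∑ m ∈ Finset.range (n + 1), Acoef y l (n - j) m * x ^ m) := by
      -- rewrite Q (n-k) via ih, then extend the sum from range (n-j+1) to range (n+1)
        refine sum_congr rfl fun j hj => ?_
        have hj1 := mem_Icc.mp hj
        rw [ih (n - j) (by omega), hS (n - j)]
        congr 1
        refine sum_subset (by rw [range_subset_range]; omega) fun m hm hnm => ?_
        rw [Acoef_eq_zero y l (by simp only [mem_range] at hm hnm; omega), zero_mul]
      rw [hrw]
      have hswap : ∑ j ∈ Icc 1 n, (-1 : MvPolynomial (Fin 3) ℚ) ^ j * gchoose y j *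
            (∑ m ∈ Finset.range (n + 1), Acoef y l (n - j) m * x ^ m) =
          ∑ m ∈ Finset.range (n + 1), (- Acoef y l n (m + 1)) * x ^ m := by
        simp_rw [mul_sum]
        rw [sum_comm]
        refine sum_congr rfl fun m _ => ?_
        rw [← Acoef_rec y l n m, sum_mul]
        exact sum_congr rfl fun j _ => by ring
      rw [hswap]
      have h1 : ∑ m ∈ Finset.range (n + 2), Acoef y l n m * x ^ m =
          ∑ m ∈ Finset.range (n + 1), Acoef y l n m * x ^ m := by
        rw [sum_range_succ, Acoef_eq_zero y l (Nat.lt_succ_self n), zero_mul, add_zero]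
      have h2 : ∑ m ∈ Finset.range (n + 2), Acoef y l n m * x ^ m =
          (∑ m ∈ Finset.range (n + 1), Acoef y l n (m + 1) * x ^ (m + 1)) +
            Acoef y l n 0 * x ^ 0 := sum_range_succ' _ (n + 1)
      have h3 : x * ∑ m ∈ Finset.range (n + 1), (- Acoef y l n (m + 1)) * x ^ m =
          - ∑ m ∈ Finset.range (n + 1), Acoef y l n (m + 1) * x ^ (m + 1) := by
        rw [mul_sum, ← sum_neg_distrib]
        exact sum_congr rfl fun m _ => by ring
      rw [h3, ← h1, h2, Acoef_zero]
      ring
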